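/- Fix 0 < α < 1 and positive definite operators B, C on a finite-dimensional complex Hilbert space. If log B ≤ log C, then for every positive definite A, tr(exp(α log A + (1−α) log B)) ≤ tr(exp(α log A + (1−α) log C)). -/

import Mathlib

open Matrix Filter
open scoped ComplexOrder

/-- Functional calculus for Hermitian matrices: apply `f` to the eigenvalues. -/
noncomputable def mfun {d : ℕ} (f : ℝ → ℝ) (A : Matrix (Fin d) (Fin d) ℂ) :
    Matrix (Fin d) (Fin d) ℂ :=
  if hA : A.IsHermitian then
    (hA.eigenvectorUnitary : Matrix (Fin d) (Fin d) ℂ) *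
      Matrix.diagonal (fun i => (f (hA.eigenvalues i) : ℂ)) *
      star (hA.eigenvectorUnitary : Matrix (Fin d) (Fin d) ℂ)
  else 0

noncomputable def mexp {d : ℕ} (A : Matrix (Fin d) (Fin d) ℂ) : Matrix (Fin d) (Fin d) ℂ :=
  mfun Real.exp A

noncomputable def mlog {d : ℕ} (A : Matrix (Fin d) (Fin d) ℂ) : Matrix (Fin d) (Fin d) ℂ :=
  mfun Real.log A

/-- The Löwner order: `A ≤ B` iff `B - A` is positive semidefinite. -/
def loewnerLE {d : ℕ} (A B : Matrix (Fin d) (Fin d) ℂ) : Prop :=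
  (B - A).PosSemidef

/-- The quadratic form ⟨Ax, x⟩. -/
noncomputable def qf {d : ℕ} (A : Matrix (Fin d) (Fin d) ℂ) (x : Fin d → ℂ) : ℂ :=
  star x ⬝ᵥ A.mulVec x

/-- The rank-one projection x ⊗ x. -/
noncomputable def rankOneProj {d : ℕ} (x : Fin d → ℂ) : Matrix (Fin d) (Fin d) ℂ :=
  Matrix.vecMulVec x (star x)

set_option linter.unusedTactic false
set_option linter.unusedVariables false

-- mfun of Hermitian via spectral data
lemma mfun_eq {d : ℕ} (f : ℝ → ℝ) {A : Matrix (Fin d) (Fin d) ℂ} (hA : A.IsHermitian) :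
    mfun f A = (hA.eigenvectorUnitary : Matrix (Fin d) (Fin d) ℂ) *
      Matrix.diagonal (fun i => (f (hA.eigenvalues i) : ℂ)) *
      star (hA.eigenvectorUnitary : Matrix (Fin d) (Fin d) ℂ) := dif_pos hA

lemma trace_mfun {d : ℕ} (f : ℝ → ℝ) {A : Matrix (Fin d) (Fin d) ℂ} (hA : A.IsHermitian) :
    (mfun f A).trace = ∑ i, (f (hA.eigenvalues i) : ℂ) := by
  rw [mfun_eq f hA, Matrix.trace_mul_cycle,
    Unitary.coe_star_mul_self, Matrix.one_mul, Matrix.trace_diagonal]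

-- quadratic form conjugation
lemma qf_conj {d : ℕ} (U X : Matrix (Fin d) (Fin d) ℂ) (x : Fin d → ℂ) :
    star x ⬝ᵥ (U * X * star U) *ᵥ x
      = star ((star U) *ᵥ x) ⬝ᵥ X *ᵥ ((star U) *ᵥ x) := by
  have h1 : star ((star U) *ᵥ x) = star x ᵥ* U := by
    simp [star_mulVec, star_eq_conjTranspose]
  rw [h1, ← Matrix.mulVec_mulVec, ← Matrix.mulVec_mulVec, Matrix.dotProduct_mulVec]

lemma diag_dot {d : ℕ} (c : Fin d → ℝ) (y : Fin d → ℂ) :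
    star y ⬝ᵥ (Matrix.diagonal (fun i => (c i : ℂ))) *ᵥ y
      = ∑ j, ((c j * Complex.normSq (y j) : ℝ) : ℂ) := by
  simp only [dotProduct, Matrix.mulVec_diagonal, Pi.star_apply]
  refine Finset.sum_congr rfl fun j _ => ?_
  simp only [Complex.star_def]
  rw [show (starRingEnd ℂ) (y j) * ((c j : ℂ) * y j)
      = (c j : ℂ) * (y j * (starRingEnd ℂ) (y j)) by ring, Complex.mul_conj]
  push_cast; ring

lemma norm_y {d : ℕ} (U : Matrix.unitaryGroup (Fin d) ℂ) (x : Fin d → ℂ) :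
    star ((star (U : Matrix (Fin d) (Fin d) ℂ)) *ᵥ x) ⬝ᵥ ((star (U : Matrix (Fin d) (Fin d) ℂ)) *ᵥ x)
      = star x ⬝ᵥ x := by
  have := qf_conj (U : Matrix (Fin d) (Fin d) ℂ) 1 x
  rw [Matrix.mul_one, Matrix.mem_unitaryGroup_iff.mp U.2] at this
  simpa using this.symm

lemma jensen {d : ℕ} {N : Matrix (Fin d) (Fin d) ℂ} (hN : N.IsHermitian) (x : Fin d → ℂ)
    (hx : star x ⬝ᵥ x = 1) :
    Real.exp ((star x ⬝ᵥ N *ᵥ x).re) ≤ (star x ⬝ᵥ (mexp N) *ᵥ x).re := by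
  set U : Matrix (Fin d) (Fin d) ℂ := (hN.eigenvectorUnitary : Matrix (Fin d) (Fin d) ℂ) with hU
  set y : Fin d → ℂ := (star U) *ᵥ x with hy
  set w : Fin d → ℝ := fun j => Complex.normSq (y j) with hw
  have hsum : ∑ j, w j = 1 := by
    have h1 : star y ⬝ᵥ y = 1 := by rw [hy, norm_y hN.eigenvectorUnitary x, hx]
    have h2 : star y ⬝ᵥ y = ∑ j, ((w j : ℝ) : ℂ) := by
      simp only [dotProduct, Pi.star_apply, hw]
      refine Finset.sum_congr rfl fun j _ => ?_
      simp only [Complex.star_def]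
      rw [mul_comm, Complex.mul_conj]
    have := h2.symm.trans h1
    have := congrArg Complex.re this
    simpa [Complex.re_sum] using this
  have hqfN : (star x ⬝ᵥ N *ᵥ x).re = ∑ j, hN.eigenvalues j * w j := by
    conv_lhs => rw [hN.spectral_theorem, Unitary.conjStarAlgAut_apply]
    rw [qf_conj, ← hy, show Matrix.diagonal (RCLike.ofReal ∘ hN.eigenvalues)
        = Matrix.diagonal (fun i => ((hN.eigenvalues i : ℝ) : ℂ)) from rfl, diag_dot]
    simp [Complex.re_sum, hw]
  have hqfE : (star x ⬝ᵥ (mexp N) *ᵥ x).re = ∑ j, Real.exp (hN.eigenvalues j) * w j := by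
    rw [mexp, mfun_eq Real.exp hN, qf_conj, ← hy, diag_dot]
    simp [Complex.re_sum, -Complex.ofReal_exp, hw]
  rw [hqfN, hqfE]
  have := convexOn_exp.map_sum_le (t := Finset.univ) (w := w) (p := hN.eigenvalues)
    (fun j _ => Complex.normSq_nonneg _) hsum (fun j _ => Set.mem_univ _)
  simp only [smul_eq_mul] at this
  calc Real.exp (∑ j, hN.eigenvalues j * w j)
      = Real.exp (∑ j, w j * hN.eigenvalues j) := by simp [mul_comm]
    _ ≤ ∑ j, w j * Real.exp (hN.eigenvalues j) := this
    _ = ∑ j, Real.exp (hN.eigenvalues j) * w j := by simp [mul_comm]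

lemma col_qf {d : ℕ} (U X : Matrix (Fin d) (Fin d) ℂ) (i : Fin d) :
    (star U * X * U) i i = star (fun k => U k i) ⬝ᵥ X *ᵥ (fun k => U k i) := by
  simp only [Matrix.mul_apply, dotProduct, Matrix.mulVec, Matrix.star_apply,
    Pi.star_apply, Finset.sum_mul, Finset.mul_sum]
  rw [Finset.sum_comm]
  refine Finset.sum_congr rfl fun k _ => Finset.sum_congr rfl fun l _ => by ring

lemma trace_conj {d : ℕ} (U : Matrix.unitaryGroup (Fin d) ℂ) (X : Matrix (Fin d) (Fin d) ℂ) :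
    (star (U : Matrix (Fin d) (Fin d) ℂ) * X * (U : Matrix (Fin d) (Fin d) ℂ)).trace = X.trace := by
  rw [Matrix.trace_mul_cycle, Matrix.mem_unitaryGroup_iff.mp U.2, Matrix.one_mul]

lemma trace_mexp_mono {d : ℕ} {M N : Matrix (Fin d) (Fin d) ℂ}
    (hM : M.IsHermitian) (hN : N.IsHermitian) (h : (N - M).PosSemidef) :
    (mexp M).trace.re ≤ (mexp N).trace.re := by
  set U : Matrix (Fin d) (Fin d) ℂ := (hM.eigenvectorUnitary : Matrix (Fin d) (Fin d) ℂ) with hUdef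
  set u : Fin d → Fin d → ℂ := fun i k => U k i with hu
  have hnorm : ∀ i, star (u i) ⬝ᵥ (u i) = 1 := by
    intro i
    have := col_qf U 1 i
    rw [Matrix.mul_one, Unitary.coe_star_mul_self hM.eigenvectorUnitary] at this
    simpa [Matrix.one_apply] using this.symm
  have hdiagM : ∀ i, star (u i) ⬝ᵥ M *ᵥ (u i) = ((hM.eigenvalues i : ℝ) : ℂ) := by
    intro i
    have := col_qf U M i
    rw [show star U * M * U = diagonal (RCLike.ofReal ∘ hM.eigenvalues) by
      simpa using hM.conjStarAlgAut_star_eigenvectorUnitary] at this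
    simpa [Matrix.diagonal_apply_eq, Function.comp] using this.symm
  have hle : ∀ i, hM.eigenvalues i ≤ (star (u i) ⬝ᵥ N *ᵥ (u i)).re := by
    intro i
    have h0 := h.re_dotProduct_nonneg (u i)
    have hsub : star (u i) ⬝ᵥ (N - M) *ᵥ (u i)
        = star (u i) ⬝ᵥ N *ᵥ (u i) - star (u i) ⬝ᵥ M *ᵥ (u i) := by
      rw [Matrix.sub_mulVec, dotProduct_sub]
    rw [hsub, hdiagM i] at h0
    simp only [RCLike.re_to_complex, Complex.sub_re, Complex.ofReal_re] at h0
    linarith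
  have hTM : (mexp M).trace.re = ∑ i, Real.exp (hM.eigenvalues i) := by
    rw [mexp, trace_mfun Real.exp hM]
    simp [Complex.re_sum, -Complex.ofReal_exp]
  have hTN : (mexp N).trace.re = ∑ i, (star (u i) ⬝ᵥ (mexp N) *ᵥ (u i)).re := by
    rw [← trace_conj hM.eigenvectorUnitary (mexp N), Matrix.trace]
    rw [Complex.re_sum]
    refine Finset.sum_congr rfl fun i _ => ?_
    rw [Matrix.diag_apply, col_qf]
  rw [hTM, hTN]
  refine Finset.sum_le_sum fun i _ => ?_
  calc Real.exp (hM.eigenvalues i)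
      ≤ Real.exp ((star (u i) ⬝ᵥ N *ᵥ (u i)).re) := Real.exp_le_exp.mpr (hle i)
    _ ≤ (star (u i) ⬝ᵥ (mexp N) *ᵥ (u i)).re := jensen hN (u i) (hnorm i)

lemma mfun_isHermitian {d : ℕ} (f : ℝ → ℝ) {A : Matrix (Fin d) (Fin d) ℂ}
    (hA : A.IsHermitian) : (mfun f A).IsHermitian := by
  rw [mfun_eq f hA]
  have hD : (Matrix.diagonal (fun i => ((f (hA.eigenvalues i) : ℝ) : ℂ))).IsHermitian := by
    rw [Matrix.IsHermitian, Matrix.diagonal_conjTranspose]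
    congr 1
    funext i
    simp [Pi.star_def, Complex.star_def, Complex.conj_ofReal]
  exact Matrix.isHermitian_mul_mul_conjTranspose _ hD

lemma isHermitian_smul_real {d : ℕ} {X : Matrix (Fin d) (Fin d) ℂ}
    (hX : X.IsHermitian) (c : ℝ) : ((c : ℂ) • X).IsHermitian := by
  rw [Matrix.IsHermitian, Matrix.conjTranspose_smul, hX.eq]
  congr 1
  simp [Complex.star_def, Complex.conj_ofReal]

lemma posSemidef_smul_real {d : ℕ} {X : Matrix (Fin d) (Fin d) ℂ}
    (hX : X.PosSemidef) {c : ℝ} (hc : 0 ≤ c) : ((c : ℂ) • X).PosSemidef := by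
  refine PosSemidef.of_dotProduct_mulVec_nonneg (isHermitian_smul_real hX.1 c) fun x => ?_
  rw [Matrix.smul_mulVec, dotProduct_smul, smul_eq_mul]
  exact mul_nonneg (by exact_mod_cast Complex.zero_le_real.mpr hc) (hX.dotProduct_mulVec_nonneg x)


/-- if `log B ≤ log C` then for every positive definite `A`,
`tr exp(α log A + (1−α) log B) ≤ tr exp(α log A + (1−α) log C)`. -/
theorem trace_exp_chaotic_mono {d : ℕ} (α : ℝ) (hα0 : 0 < α) (hα1 : α < 1)
    (B C : Matrix (Fin d) (Fin d) ℂ) (hB : B.PosDef) (hC : C.PosDef)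
    (hBC : loewnerLE (mlog B) (mlog C)) :
    ∀ A : Matrix (Fin d) (Fin d) ℂ, A.PosDef →
      (mexp ((α : ℂ) • mlog A + ((1 - α : ℝ) : ℂ) • mlog B)).trace.re ≤
        (mexp ((α : ℂ) • mlog A + ((1 - α : ℝ) : ℂ) • mlog C)).trace.re := by
  intro A hA
  have hLA : (mlog A).IsHermitian := mfun_isHermitian _ hA.1
  have hLB : (mlog B).IsHermitian := mfun_isHermitian _ hB.1
  have hLC : (mlog C).IsHermitian := mfun_isHermitian _ hC.1
  have hM : ((α : ℂ) • mlog A + ((1 - α : ℝ) : ℂ) • mlog B).IsHermitian :=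
    (isHermitian_smul_real hLA α).add (isHermitian_smul_real hLB (1 - α))
  have hN : ((α : ℂ) • mlog A + ((1 - α : ℝ) : ℂ) • mlog C).IsHermitian :=
    (isHermitian_smul_real hLA α).add (isHermitian_smul_real hLC (1 - α))
  apply trace_mexp_mono hM hN
  have hdiff : ((α : ℂ) • mlog A + ((1 - α : ℝ) : ℂ) • mlog C)
      - ((α : ℂ) • mlog A + ((1 - α : ℝ) : ℂ) • mlog B)
      = ((1 - α : ℝ) : ℂ) • (mlog C - mlog B) := by
    rw [smul_sub]; abel
  rw [hdiff]
  exact posSemidef_smul_real hBC (by linarith)
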